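/- Let b > 0, L > 0, and let v : [0,L] → ℝ be continuously differentiable with v(0) = 0. Then ∫_0^L v(t)² e^{-bt} dt ≤ (4/b²) ∫_0^L v'(t)² e^{-bt} dt. -/

import Mathlib

open MeasureTheory intervalIntegral

/-- Weighted one-dimensional Hardy-type inequality with exponential weight:
if `v(0) = 0`, then `∫₀ᴸ v² e^{-bt} ≤ (4/b²) ∫₀ᴸ (v')² e^{-bt}`. -/
theorem weighted_hardy_exponential (b L : ℝ) (hb : 0 < b) (hL : 0 < L)
    (v v' : ℝ → ℝ)
    (hderiv : ∀ t ∈ Set.Icc (0 : ℝ) L, HasDerivAt v (v' t) t)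
    (hcont : ContinuousOn v' (Set.Icc (0 : ℝ) L))
    (hv0 : v 0 = 0) :
    (∫ t in (0 : ℝ)..L, (v t) ^ 2 * Real.exp (-b * t)) ≤
      (4 / b ^ 2) * ∫ t in (0 : ℝ)..L, (v' t) ^ 2 * Real.exp (-b * t) := by
  have hbne : b ≠ 0 := hb.ne'
  have huIcc : Set.uIcc (0 : ℝ) L = Set.Icc 0 L := Set.uIcc_of_le hL.le
  have hvc : ContinuousOn v (Set.Icc (0 : ℝ) L) := fun t ht =>
    ((hderiv t ht).continuousAt).continuousWithinAt
  have hec : Continuous fun t : ℝ => Real.exp (-b * t) := by continuity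
  -- integrability facts
  have int1 : IntervalIntegrable (fun t => v t ^ 2 * Real.exp (-b * t)) volume 0 L := by
    apply ContinuousOn.intervalIntegrable
    rw [huIcc]
    exact (hvc.pow 2).mul hec.continuousOn
  have int2 : IntervalIntegrable (fun t => v' t ^ 2 * Real.exp (-b * t)) volume 0 L := by
    apply ContinuousOn.intervalIntegrable
    rw [huIcc]
    exact (hcont.pow 2).mul hec.continuousOn
  have int3 : IntervalIntegrable (fun t => v t * v' t * Real.exp (-b * t)) volume 0 L := by
    apply ContinuousOn.intervalIntegrable
    rw [huIcc]
    exact (hvc.mul hcont).mul hec.continuousOn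
  set I := ∫ t in (0 : ℝ)..L, v t ^ 2 * Real.exp (-b * t) with hI
  set J := ∫ t in (0 : ℝ)..L, v' t ^ 2 * Real.exp (-b * t) with hJ
  set K := ∫ t in (0 : ℝ)..L, v t * v' t * Real.exp (-b * t) with hK
  -- Step 1: integration by parts: I - (2/b) K ≤ 0
  have hparts :
      (∫ t in (0 : ℝ)..L,
        (v t ^ 2 * Real.exp (-b * t) - (2 / b) * (v t * v' t * Real.exp (-b * t)))) =
      (-(1 / b) * Real.exp (-b * L) * v L ^ 2) - (-(1 / b) * Real.exp (-b * 0) * v 0 ^ 2) := by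
    apply intervalIntegral.integral_eq_sub_of_hasDerivAt
    · intro t ht
      rw [huIcc] at ht
      have he : HasDerivAt (fun t : ℝ => Real.exp (-b * t)) (-b * Real.exp (-b * t)) t := by
        have := (((hasDerivAt_id t).const_mul (-b)).exp)
        simpa [mul_comm] using this
      have hv2 : HasDerivAt (fun t => v t ^ 2) (2 * v t ^ 1 * v' t) t := (hderiv t ht).pow 2
      have hd := ((he.mul hv2).const_mul (-(1 / b)))
      have heq : -(1 / b) * (-b * Real.exp (-b * t) * v t ^ 2
            + Real.exp (-b * t) * (2 * v t ^ 1 * v' t))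
          = v t ^ 2 * Real.exp (-b * t) - (2 / b) * (v t * v' t * Real.exp (-b * t)) := by
        field_simp
        ring
      rw [heq] at hd
      exact hd.congr_deriv rfl |>.congr_of_eventuallyEq (by filter_upwards with x; simp only [Pi.mul_apply]; ring)
    · exact int1.sub (int3.const_mul _)
  rw [intervalIntegral.integral_sub int1 (int3.const_mul _),
      intervalIntegral.integral_const_mul] at hparts
  have hstep1 : I ≤ (2 / b) * K := by
    have h1 : (0 : ℝ) ≤ (1 / b) * Real.exp (-b * L) * v L ^ 2 := by positivity
    rw [hv0] at hparts
    nlinarith [hparts]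
  -- Step 2: pointwise AM-GM
  have hstep2 : (2 / b) * K ≤ (1 / 2) * I + (2 / b ^ 2) * J := by
    rw [hK, hI, hJ, ← intervalIntegral.integral_const_mul, ← intervalIntegral.integral_const_mul,
        ← intervalIntegral.integral_const_mul, ← intervalIntegral.integral_add
          ((int1.const_mul _)) ((int2.const_mul _))]
    apply intervalIntegral.integral_mono_on hL.le (int3.const_mul _)
      ((int1.const_mul _).add (int2.const_mul _))
    intro t ht
    have he : (0 : ℝ) < Real.exp (-b * t) := Real.exp_pos _
    have key : v t * v' t ≤ (b / 4) * v t ^ 2 + (1 / b) * v' t ^ 2 := by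
      rw [← sub_nonneg]
      have hq : b / 4 * v t ^ 2 + 1 / b * v' t ^ 2 - v t * v' t
          = (b * v t - 2 * v' t) ^ 2 / (4 * b) := by
        field_simp
        ring
      rw [hq]
      positivity
    have := mul_le_mul_of_nonneg_right key he.le
    have h2b : (0 : ℝ) < 2 / b := by positivity
    calc 2 / b * (v t * v' t * Real.exp (-b * t))
        ≤ 2 / b * (((b / 4) * v t ^ 2 + (1 / b) * v' t ^ 2) * Real.exp (-b * t)) := by
          apply mul_le_mul_of_nonneg_left _ h2b.le
          exact this
      _ = 1 / 2 * (v t ^ 2 * Real.exp (-b * t)) + 2 / b ^ 2 * (v' t ^ 2 * Real.exp (-b * t)) := by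
          field_simp
          ring
  -- conclude
  have hJ4 : (2 : ℝ) / b ^ 2 * J = (1 / 2) * ((4 / b ^ 2) * J) := by ring
  linarith [hstep1, hstep2]
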